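/- arXiv:1009.4813 — 2 statements merged into one kernel-verified Lean document; each statement's English description precedes it below -/
import Mathlib

section
/- Let ρ > 1 and let E_ρ ⊂ ℂ be the open region bounded by the ellipse with foci ±1 given parametrically by θ ↦ (ρ e^{iθ} + ρ^{−1} e^{−iθ})/2, θ ∈ [0, 2π] (the canonical ellipse of index ρ relative to the segment [−1,1]); note [−1,1] ⊂ E_ρ. Let f be holomorphic on E_ρ. Then the Fourier–Chebyshev series of f, namely (1/π)·(∫_{−1}^{1} f(x)(1−x²)^{−1/2} dx) + Σ_{k=1}^{∞} (2/π)·(∫_{−1}^{1} f(x) T_k(x) (1−x²)^{−1/2} dx)·T_k(z), converges to f(z) locally uniformly (i.e., uniformly on every compact subset) of E_ρ, where T_k(z) denotes the value at z ∈ ℂ of the k-th Chebyshev polynomial of the first kind. -/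
open MeasureTheory Polynomial

/-- The open region bounded by the canonical ellipse of index `ρ > 1` with foci `±1`:
the image of the open annulus `ρ⁻¹ < |w| < ρ` under the Joukowski map `w ↦ (w + w⁻¹)/2`;
its boundary is the curve `θ ↦ (ρ e^{iθ} + ρ⁻¹ e^{-iθ})/2`, and it contains `[-1, 1]`. -/
def canonicalEllipseRegion (ρ : ℝ) : Set ℂ :=
  {z : ℂ | ∃ w : ℂ, ρ⁻¹ < ‖w‖ ∧ ‖w‖ < ρ ∧ z = (w + w⁻¹) / 2}

/-- The `k`-th Fourier–Chebyshev coefficient of `f`: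
`c₀ = (1/π) ∫_{-1}^{1} f(x) (1-x²)^{-1/2} dx` and
`c_k = (2/π) ∫_{-1}^{1} f(x) T_k(x) (1-x²)^{-1/2} dx` for `k ≥ 1`. -/
noncomputable def fourierChebyshevCoeff (f : ℂ → ℂ) (k : ℕ) : ℂ :=
  (if k = 0 then (1 : ℂ) / (Real.pi : ℂ) else (2 : ℂ) / (Real.pi : ℂ)) *
    ∫ x in Set.Ioo (-1 : ℝ) 1,
      f (x : ℂ) * (Polynomial.Chebyshev.T ℂ (k : ℤ)).eval (x : ℂ) /
        (Real.sqrt (1 - x ^ 2) : ℂ)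

namespace ChebyshevSeriesAux

open Complex Set Metric Filter intervalIntegral Topology

noncomputable def J (w : ℂ) : ℂ := (w + w⁻¹) / 2

lemma J_inv (w : ℂ) : J w⁻¹ = J w := by
  simp [J, add_comm]

def Ann (a b : ℝ) : Set ℂ := {w : ℂ | a < ‖w‖ ∧ ‖w‖ < b}

lemma isOpen_Ann (a b : ℝ) : IsOpen (Ann a b) := by
  have : Ann a b = (fun w : ℂ => ‖w‖) ⁻¹' (Set.Ioo a b) := rfl
  rw [this]
  exact isOpen_Ioo.preimage continuous_norm

lemma ne_zero_of_mem_Ann {a b : ℝ} (ha : 0 ≤ a) {w : ℂ} (hw : w ∈ Ann a b) : w ≠ 0 := by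
  intro h
  rw [h] at hw
  simp only [Ann, mem_setOf_eq, norm_zero] at hw
  exact absurd hw.1 (not_lt.2 ha)

lemma T_eval_J (u : ℂ) (hu : u ≠ 0) (k : ℕ) :
    (Chebyshev.T ℂ (k : ℤ)).eval (J u) = (u ^ k + u⁻¹ ^ k) / 2 := by
  set θ : ℂ := -Complex.I * Complex.log u with hθ
  have hexp : Complex.exp (θ * I) = u := by
    rw [hθ]
    have : -Complex.I * Complex.log u * I = Complex.log u := by
      rw [mul_comm, ← mul_assoc, mul_neg, Complex.I_mul_I]; ring
    rw [this, Complex.exp_log hu]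
  have hcos : Complex.cos θ = J u := by
    rw [Complex.cos, J, neg_mul, Complex.exp_neg, hexp]
  have hcosk : Complex.cos ((k : ℂ) * θ) = (u ^ k + u⁻¹ ^ k) / 2 := by
    rw [Complex.cos, neg_mul, Complex.exp_neg, mul_assoc, Complex.exp_nat_mul, hexp, inv_pow]
  rw [← hcos, Polynomial.Chebyshev.T_complex_cos θ (k : ℤ), ← hcosk]
  norm_num

section Main

variable {ρ : ℝ} (f : ℂ → ℂ)

/-- J composed with f -/
noncomputable def g (w : ℂ) : ℂ := f (J w)

variable {f}

lemma mapsTo_J_Ann (ρ' : ℝ) : ∀ w ∈ Ann ρ'⁻¹ ρ', J w ∈ canonicalEllipseRegion ρ' :=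
  fun w hw => ⟨w, hw.1, hw.2, rfl⟩

lemma g_diffAt (hρ : 1 < ρ) (hf : DifferentiableOn ℂ f (canonicalEllipseRegion ρ))
    {w : ℂ} (hw : w ∈ Ann ρ⁻¹ ρ) : DifferentiableAt ℂ (g f) w := by
  have hρ0 : (0:ℝ) < ρ⁻¹ := inv_pos.2 (by linarith)
  have h0 : w ≠ 0 := ne_zero_of_mem_Ann hρ0.le hw
  have hJd : DifferentiableOn ℂ J (Ann ρ⁻¹ ρ) := by
    intro v hv
    have hv0 : v ≠ 0 := ne_zero_of_mem_Ann hρ0.le hv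
    exact (((differentiableAt_id.add (differentiableAt_inv hv0)).div_const 2)).differentiableWithinAt
  have : DifferentiableOn ℂ (g f) (Ann ρ⁻¹ ρ) :=
    hf.comp hJd (fun v hv => mapsTo_J_Ann ρ v hv)
  exact this.differentiableAt ((isOpen_Ann _ _).mem_nhds hw)

lemma mem_Ann_of_abs {r₁ r₂ : ℝ} (hρ : 1 < ρ) (h1 : ρ⁻¹ < r₁) (h2 : r₂ < ρ) {w : ℂ}
    (hw1 : r₁ ≤ ‖w‖) (hw2 : ‖w‖ ≤ r₂) : w ∈ Ann ρ⁻¹ ρ :=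
  ⟨lt_of_lt_of_le h1 hw1, lt_of_le_of_lt hw2 h2⟩




variable {f : ℂ → ℂ}

lemma exp_inv_pow (θ : ℝ) (k : ℕ) :
    ((Complex.exp (θ * I))⁻¹) ^ k = ((Real.cos (k * θ) : ℝ) : ℂ) - ((Real.sin (k * θ) : ℝ) : ℂ) * I := by
  rw [← Complex.exp_neg, ← Complex.exp_nat_mul]
  have h : (k : ℂ) * -(↑θ * I) = ((-(k * θ) : ℝ) : ℂ) * I := by push_cast; ring
  rw [h, Complex.exp_mul_I]
  push_cast [Real.cos_neg, Real.sin_neg]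
  rw [Complex.cos_neg, Complex.sin_neg]
  ring

lemma J_exp (θ : ℝ) : ((Complex.exp (θ * I) + (Complex.exp (θ * I))⁻¹) / 2) = ((Real.cos θ : ℝ) : ℂ) := by
  rw [← Complex.exp_neg, Complex.ofReal_cos, Complex.cos, neg_mul]

lemma sin_reflect (k : ℕ) (θ : ℝ) : Real.sin (k * (2 * Real.pi - θ)) = - Real.sin (k * θ) := by
  have : (k : ℝ) * (2 * Real.pi - θ) = (k : ℝ) * (2 * Real.pi) - k * θ := by ring
  rw [this, Real.sin_sub, Real.cos_nat_mul_two_pi]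
  have hs : Real.sin ((k : ℝ) * (2 * Real.pi)) = 0 := by
    have : (k : ℝ) * (2 * Real.pi) = (2 * k : ℤ) * Real.pi := by push_cast; ring
    rw [this, Real.sin_int_mul_pi]
  rw [hs]; ring

lemma cos_reflect (k : ℕ) (θ : ℝ) : Real.cos (k * (2 * Real.pi - θ)) = Real.cos (k * θ) := by
  have : (k : ℝ) * (2 * Real.pi - θ) = (k : ℝ) * (2 * Real.pi) - k * θ := by ring
  rw [this, Real.cos_sub, Real.cos_nat_mul_two_pi]
  have hs : Real.sin ((k : ℝ) * (2 * Real.pi)) = 0 := by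
    have : (k : ℝ) * (2 * Real.pi) = (2 * k : ℤ) * Real.pi := by push_cast; ring
    rw [this, Real.sin_int_mul_pi]
  rw [hs]; ring

lemma sin_int_zero (k : ℕ) :
    ∫ θ in (0:ℝ)..(2 * Real.pi), f ((Real.cos θ : ℝ) : ℂ) * ((Real.sin (k * θ) : ℝ) : ℂ) = 0 := by
  set h : ℝ → ℂ := fun θ => f ((Real.cos θ : ℝ) : ℂ) * ((Real.sin (k * θ) : ℝ) : ℂ) with hh
  have key : ∀ θ, h (2 * Real.pi - θ) = - h θ := by
    intro θ
    simp only [hh, Real.cos_two_pi_sub, sin_reflect]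
    push_cast
    ring
  have h1 := intervalIntegral.integral_comp_sub_left h (2 * Real.pi) (a := 0) (b := 2 * Real.pi)
  simp only [sub_self, sub_zero] at h1
  have h2 : ∫ x in (0:ℝ)..(2*Real.pi), h (2 * Real.pi - x) = - ∫ x in (0:ℝ)..(2*Real.pi), h x := by
    rw [← intervalIntegral.integral_neg]
    exact intervalIntegral.integral_congr (fun θ _ => key θ)
  have heq := h2.symm.trans h1
  linear_combination (-(1:ℂ)/2) * heq

lemma cos_fold (hc : Continuous fun θ : ℝ => f ((Real.cos θ : ℝ) : ℂ)) (k : ℕ) :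
    ∫ θ in (0:ℝ)..(2 * Real.pi), f ((Real.cos θ : ℝ) : ℂ) * ((Real.cos (k * θ) : ℝ) : ℂ)
      = 2 * ∫ θ in (0:ℝ)..Real.pi, f ((Real.cos θ : ℝ) : ℂ) * ((Real.cos (k * θ) : ℝ) : ℂ) := by
  set q : ℝ → ℂ := fun θ => f ((Real.cos θ : ℝ) : ℂ) * ((Real.cos (k * θ) : ℝ) : ℂ) with hq
  have hqc : Continuous q := by
    apply hc.mul
    fun_prop
  have h1 := intervalIntegral.integral_comp_sub_left q (2 * Real.pi) (a := 0) (b := Real.pi)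
  have hb1 : 2 * Real.pi - Real.pi = Real.pi := by ring
  rw [hb1, sub_zero] at h1
  have h2 : ∫ x in (0:ℝ)..Real.pi, q (2 * Real.pi - x) = ∫ x in (0:ℝ)..Real.pi, q x := by
    apply intervalIntegral.integral_congr
    intro θ _
    simp only [hq, Real.cos_two_pi_sub, cos_reflect]
  have hadd := intervalIntegral.integral_add_adjacent_intervals
    (hqc.intervalIntegrable (μ := volume) 0 Real.pi)
    (hqc.intervalIntegrable (μ := volume) Real.pi (2 * Real.pi))
  rw [← hadd, ← h1, h2]
  ring

lemma image_cos : Real.cos '' (Ioo 0 Real.pi) = Ioo (-1 : ℝ) 1 := by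
  ext y
  constructor
  · rintro ⟨θ, hθ, rfl⟩
    have h0 : (0:ℝ) ∈ Icc (0:ℝ) Real.pi := ⟨le_rfl, Real.pi_pos.le⟩
    have hπ : Real.pi ∈ Icc (0:ℝ) Real.pi := ⟨Real.pi_pos.le, le_rfl⟩
    have hθ' : θ ∈ Icc (0:ℝ) Real.pi := ⟨hθ.1.le, hθ.2.le⟩
    constructor
    · have := Real.strictAntiOn_cos hθ' hπ hθ.2
      simpa using this
    · have := Real.strictAntiOn_cos h0 hθ' hθ.1
      simpa using this
  · intro hy
    refine ⟨Real.arccos y, ⟨Real.arccos_pos.2 hy.2, ?_⟩, Real.cos_arccos hy.1.le hy.2.le⟩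
    refine lt_of_le_of_ne (Real.arccos_le_pi y) ?_
    rw [Ne, Real.arccos_eq_pi]
    exact not_le.2 hy.1

lemma chg_var (k : ℕ) :
    (∫ x in Ioo (-1 : ℝ) 1,
        f (x : ℂ) * (Polynomial.Chebyshev.T ℂ (k : ℤ)).eval (x : ℂ) / (Real.sqrt (1 - x ^ 2) : ℂ))
    = ∫ θ in Ioo (0:ℝ) Real.pi, f ((Real.cos θ : ℝ) : ℂ) * ((Real.cos (k * θ) : ℝ) : ℂ) := by
  rw [← image_cos, integral_image_eq_integral_abs_deriv_smul measurableSet_Ioo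
    (fun θ _ => (Real.hasDerivAt_cos θ).hasDerivWithinAt)
    (Real.injOn_cos.mono Ioo_subset_Icc_self)]
  apply MeasureTheory.setIntegral_congr_fun measurableSet_Ioo
  intro θ hθ
  have hs : 0 < Real.sin θ := Real.sin_pos_of_pos_of_lt_pi hθ.1 hθ.2
  have h1 : |(-Real.sin θ)| = Real.sin θ := by rw [abs_neg, abs_of_pos hs]
  have h2 : Real.sqrt (1 - Real.cos θ ^ 2) = Real.sin θ := by
    rw [← Real.sin_sq, Real.sqrt_sq hs.le]
  have h3 : (Polynomial.Chebyshev.T ℂ (k : ℤ)).eval ((Real.cos θ : ℝ) : ℂ)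
      = ((Real.cos (k * θ) : ℝ) : ℂ) := by
    rw [← Polynomial.Chebyshev.complex_ofReal_eval_T, Polynomial.Chebyshev.T_real_cos]
    push_cast
    ring_nf
  dsimp only
  rw [h1, h2, h3, Complex.real_smul]
  have hs' : Complex.sin (θ : ℂ) ≠ 0 := by
    rw [← Complex.ofReal_sin]
    exact_mod_cast hs.ne'
  have hs'' : ((Real.sin θ : ℝ) : ℂ) ≠ 0 := by exact_mod_cast hs.ne'
  field_simp

section Part3
variable {ρ : ℝ} {f : ℂ → ℂ}

lemma circle_one_eq (k : ℕ) :
    (∮ w in C(0, (1:ℝ)), g f w * (w⁻¹) ^ (k + 1))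
      = I * ∫ θ in (0:ℝ)..(2 * Real.pi),
          f ((Real.cos θ : ℝ) : ℂ) * (((Real.cos (k * θ) : ℝ) : ℂ) - ((Real.sin (k * θ) : ℝ) : ℂ) * I) := by
  rw [← intervalIntegral.integral_const_mul]
  simp only [circleIntegral, deriv_circleMap]
  apply intervalIntegral.integral_congr
  intro θ _
  have hcm : circleMap 0 1 θ = Complex.exp (θ * I) := by
    simp [circleMap]
  have hne : Complex.exp ((θ:ℂ) * I) ≠ 0 := Complex.exp_ne_zero _
  simp only [hcm, smul_eq_mul]
  have hg : g f (Complex.exp (θ * I)) = f ((Real.cos θ : ℝ) : ℂ) := by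
    unfold g J
    rw [J_exp]
  rw [hg, pow_succ', ← exp_inv_pow θ k]
  field_simp

lemma f_cos_continuous (hρ : 1 < ρ) (hf : DifferentiableOn ℂ f (canonicalEllipseRegion ρ)) :
    Continuous fun θ : ℝ => f ((Real.cos θ : ℝ) : ℂ) := by
  have key : ∀ θ : ℝ, (fun θ : ℝ => f ((Real.cos θ : ℝ) : ℂ)) θ = (g f ∘ fun θ : ℝ => Complex.exp (θ * I)) θ := by
    intro θ
    simp only [Function.comp_apply]
    unfold g J
    rw [J_exp]
  rw [continuous_iff_continuousAt]
  intro θ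
  rw [continuousAt_congr (by filter_upwards using key)]
  have hmem : Complex.exp ((θ:ℂ) * I) ∈ Ann ρ⁻¹ ρ := by
    have habs : ‖Complex.exp ((θ:ℂ) * I)‖ = 1 := by
      rw [Complex.norm_exp]
      simp
    exact mem_Ann_of_abs hρ (inv_lt_one_of_one_lt₀ hρ) hρ habs.ge habs.le
  have hφ : Continuous fun θ : ℝ => Complex.exp ((θ:ℂ) * I) := by fun_prop
  exact ContinuousAt.comp (f := fun θ : ℝ => Complex.exp ((θ:ℂ) * I)) (x := θ)
    (g_diffAt hρ hf hmem).continuousAt hφ.continuousAt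

lemma coeff_eq_circle (hρ : 1 < ρ) (hf : DifferentiableOn ℂ f (canonicalEllipseRegion ρ))
    {r : ℝ} (hr1 : 1 ≤ r) (hrρ : r < ρ) (k : ℕ) :
    fourierChebyshevCoeff f k
      = (if k = 0 then (1:ℂ) else 2) *
        ((2 * (Real.pi : ℂ) * I)⁻¹ * ∮ w in C(0, r), g f w * (w⁻¹) ^ (k + 1)) := by
  have hρinv : ρ⁻¹ < 1 := inv_lt_one_of_one_lt₀ hρ
  have hradial : (∮ w in C(0, r), g f w * (w⁻¹) ^ (k + 1))
      = ∮ w in C(0, (1:ℝ)), g f w * (w⁻¹) ^ (k + 1) := by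
    apply Complex.circleIntegral_eq_of_differentiable_on_annulus_off_countable
      one_pos hr1 countable_empty
    · intro w hw
      simp only [mem_diff, mem_closedBall, mem_ball, Complex.dist_eq, sub_zero, not_lt] at hw
      have hwA : w ∈ Ann ρ⁻¹ ρ := mem_Ann_of_abs hρ hρinv hrρ hw.2 hw.1
      have h0 : w ≠ 0 := ne_zero_of_mem_Ann (inv_pos.2 (by linarith)).le hwA
      exact (((g_diffAt hρ hf hwA).mul
        (((differentiableAt_inv h0)).pow (k+1))).continuousAt).continuousWithinAt
    · intro w hw
      simp only [mem_diff, mem_ball, mem_closedBall, Complex.dist_eq, sub_zero, not_le,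
        mem_empty_iff_false, not_false_iff, and_true] at hw
      have hwA : w ∈ Ann ρ⁻¹ ρ := mem_Ann_of_abs hρ hρinv hrρ hw.2.le hw.1.le
      have h0 : w ≠ 0 := ne_zero_of_mem_Ann (inv_pos.2 (by linarith)).le hwA
      exact (g_diffAt hρ hf hwA).mul ((differentiableAt_inv h0).pow (k+1))
  have hc := f_cos_continuous hρ hf
  have hcont1 : Continuous fun θ : ℝ => f ((Real.cos θ : ℝ) : ℂ) * ((Real.cos (k * θ) : ℝ) : ℂ) := by
    apply hc.mul; fun_prop
  have hcont2 : Continuous fun θ : ℝ => f ((Real.cos θ : ℝ) : ℂ) * ((Real.sin (k * θ) : ℝ) : ℂ) * I := by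
    apply Continuous.mul _ continuous_const
    apply hc.mul; fun_prop
  have hsplit : (∫ θ in (0:ℝ)..(2 * Real.pi),
        f ((Real.cos θ : ℝ) : ℂ) * (((Real.cos (k * θ) : ℝ) : ℂ) - ((Real.sin (k * θ) : ℝ) : ℂ) * I))
      = ∫ θ in (0:ℝ)..(2 * Real.pi), f ((Real.cos θ : ℝ) : ℂ) * ((Real.cos (k * θ) : ℝ) : ℂ) := by
    have : (∫ θ in (0:ℝ)..(2 * Real.pi),
        f ((Real.cos θ : ℝ) : ℂ) * (((Real.cos (k * θ) : ℝ) : ℂ) - ((Real.sin (k * θ) : ℝ) : ℂ) * I))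
      = ∫ θ in (0:ℝ)..(2 * Real.pi),
          (f ((Real.cos θ : ℝ) : ℂ) * ((Real.cos (k * θ) : ℝ) : ℂ)
            - f ((Real.cos θ : ℝ) : ℂ) * ((Real.sin (k * θ) : ℝ) : ℂ) * I) := by
      apply intervalIntegral.integral_congr; intro θ _; ring
    rw [this, intervalIntegral.integral_sub (hcont1.intervalIntegrable _ _)
      (hcont2.intervalIntegrable _ _)]
    have : (∫ θ in (0:ℝ)..(2 * Real.pi),
        f ((Real.cos θ : ℝ) : ℂ) * ((Real.sin (k * θ) : ℝ) : ℂ) * I)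
        = (∫ θ in (0:ℝ)..(2 * Real.pi),
        f ((Real.cos θ : ℝ) : ℂ) * ((Real.sin (k * θ) : ℝ) : ℂ)) * I :=
      intervalIntegral.integral_mul_const _ _
    rw [this, sin_int_zero]
    simp
  have hIoo : (∫ θ in (0:ℝ)..Real.pi, f ((Real.cos θ : ℝ) : ℂ) * ((Real.cos (k * θ) : ℝ) : ℂ))
      = ∫ θ in Ioo (0:ℝ) Real.pi, f ((Real.cos θ : ℝ) : ℂ) * ((Real.cos (k * θ) : ℝ) : ℂ) := by
    rw [intervalIntegral.integral_of_le Real.pi_pos.le, MeasureTheory.integral_Ioc_eq_integral_Ioo]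
  rw [hradial, circle_one_eq, hsplit, cos_fold hc, fourierChebyshevCoeff, chg_var, ← hIoo]
  have hπ : ((Real.pi : ℝ) : ℂ) ≠ 0 := Complex.ofReal_ne_zero.mpr Real.pi_ne_zero
  by_cases hk : k = 0 <;> simp only [hk, if_true, if_false, reduceIte]
  · field_simp
  · field_simp

end Part3

section Part4
variable {ρ : ℝ} {f : ℂ → ℂ}

noncomputable def Ker (u w : ℂ) : ℂ := (w - w⁻¹) / ((w - u) * (w - u⁻¹))

lemma ne_of_abs_lt {a b : ℂ} (h : ‖a‖ < ‖b‖) : b ≠ a :=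
  fun h' => h.ne' (congrArg norm h')

lemma mem_sphere_abs {w : ℂ} {s : ℝ} (hw : w ∈ sphere (0:ℂ) s) : ‖w‖ = s := by
  simpa using mem_sphere_zero_iff_norm.mp hw

lemma KerCont {u : ℂ} {s : ℝ} (h : ∀ w ∈ sphere (0:ℂ) s, w ≠ 0 ∧ w ≠ u ∧ w ≠ u⁻¹) :
    ContinuousOn (Ker u) (sphere (0:ℂ) s) := by
  apply ContinuousOn.div
  · exact continuousOn_id.sub (continuousOn_id.inv₀ fun w hw => (h w hw).1)
  · exact ((continuousOn_id.sub continuousOn_const).mul (continuousOn_id.sub continuousOn_const))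
  · intro w hw
    exact mul_ne_zero (sub_ne_zero.mpr (h w hw).2.1) (sub_ne_zero.mpr (h w hw).2.2)

set_option maxHeartbeats 1000000 in
lemma rep (hρ : 1 < ρ) (hf : DifferentiableOn ℂ f (canonicalEllipseRegion ρ))
    {ρ₁ r : ℝ} (h1 : 1 < ρ₁) (h2 : ρ₁ < r) (h3 : r < ρ)
    {u : ℂ} (hu1 : 1 ≤ ‖u‖) (hu2 : ‖u‖ < ρ₁) :
    (∮ w in C(0, r), g f w * Ker u w) = 2 * (Real.pi : ℂ) * I * f (J u) := by
  have hr1 : 1 < r := h1.trans h2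
  have hr0 : 0 < r := by linarith
  have hri0 : 0 < r⁻¹ := inv_pos.2 hr0
  have hri1 : r⁻¹ < 1 := inv_lt_one_of_one_lt₀ hr1
  have hu0 : u ≠ 0 := by
    intro h; rw [h] at hu1; simp at hu1; linarith
  have huabs0 : 0 < ‖u‖ := lt_of_lt_of_le one_pos hu1
  have huiabs : ‖u⁻¹‖ = (‖u‖)⁻¹ := norm_inv _
  have huiabs1 : ‖u⁻¹‖ ≤ 1 := by
    rw [huiabs]; exact inv_le_one_of_one_le₀ hu1
  have huiabsρ : ρ⁻¹ < ‖u⁻¹‖ := by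
    rw [huiabs]
    exact inv_strictAnti₀ huabs0 (by linarith)
  have hriρ₁ : r⁻¹ < ρ₁⁻¹ := inv_strictAnti₀ (by linarith) h2
  have hρ₁u : ρ₁⁻¹ < ‖u⁻¹‖ := by
    rw [huiabs]; exact inv_strictAnti₀ huabs0 hu2
  have hρ0 : (0:ℝ) < ρ⁻¹ := inv_pos.2 (by linarith)
  have hρinv1 : ρ⁻¹ < 1 := inv_lt_one_of_one_lt₀ hρ
  have huA : u ∈ Ann ρ⁻¹ ρ := ⟨lt_of_lt_of_le hρinv1 hu1, by linarith⟩
  have huiA : u⁻¹ ∈ Ann ρ⁻¹ ρ := ⟨huiabsρ, by linarith [huiabs1]⟩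
  have hAnn : IsOpen (Ann ρ⁻¹ ρ) := isOpen_Ann _ _
  have hgd : DifferentiableOn ℂ (g f) (Ann ρ⁻¹ ρ) :=
    fun w hw => (g_diffAt hρ hf hw).differentiableWithinAt
  set g₂ : ℂ → ℂ := dslope (dslope (g f) u) u⁻¹ with hg₂def
  have hg₂ : DifferentiableOn ℂ g₂ (Ann ρ⁻¹ ρ) := by
    rw [hg₂def, Complex.differentiableOn_dslope (hAnn.mem_nhds huiA),
      Complex.differentiableOn_dslope (hAnn.mem_nhds huA)]
    exact hgd
  have hds0 : dslope (g f) u u⁻¹ = 0 := by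
    by_cases hcase : u⁻¹ = u
    · rw [hcase, dslope_same]
      have hD : HasDerivAt (g f) (deriv (g f) u) u := (g_diffAt hρ hf huA).hasDerivAt
      have hDi : HasDerivAt (g f) (deriv (g f) u) u⁻¹ := by rw [hcase]; exact hD
      have hinv : HasDerivAt (fun w : ℂ => w⁻¹) (-(u ^ 2)⁻¹) u := hasDerivAt_inv hu0
      have hcomp := HasDerivAt.comp u hDi hinv
      have hgg : (g f) ∘ (fun w : ℂ => w⁻¹) = g f := by
        funext w; simp only [Function.comp_apply]; unfold g; rw [J_inv]
      rw [hgg] at hcomp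
      have huniq := hD.unique hcomp
      have hsq : (u:ℂ) ^ 2 = 1 := by
        rw [sq]
        nth_rewrite 1 [← hcase]
        exact inv_mul_cancel₀ hu0
      rw [hsq, inv_one] at huniq
      linear_combination (1/2 : ℂ) * huniq
    · rw [dslope_of_ne _ hcase, slope_def_field]
      have hsym' : g f u⁻¹ = g f u := by unfold g; rw [J_inv]
      rw [hsym', sub_self, zero_div]
  have hfact : ∀ w : ℂ, g f w - f (J u) = (w - u) * ((w - u⁻¹) * g₂ w) := by
    intro w
    have e1 := sub_smul_dslope (g f) u w
    have e2 := sub_smul_dslope (dslope (g f) u) u⁻¹ w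
    rw [hds0, sub_zero] at e2
    rw [smul_eq_mul] at e1 e2
    have e2' : (w - u⁻¹) * g₂ w = dslope (g f) u w := by rw [hg₂def]; exact e2
    have hgu : g f u = f (J u) := rfl
    rw [← hgu, e2', e1]
  have houter : ∀ w ∈ sphere (0:ℂ) r, w ≠ 0 ∧ w ≠ u ∧ w ≠ u⁻¹ := by
    intro w hw
    have habs := mem_sphere_abs hw
    refine ⟨?_, ?_, ?_⟩
    · intro h; rw [h] at habs; simp at habs; linarith
    · exact ne_of_abs_lt (by rw [habs]; linarith)
    · exact ne_of_abs_lt (by rw [habs]; linarith [huiabs1])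
  have hinner : ∀ w ∈ sphere (0:ℂ) r⁻¹, w ≠ 0 ∧ w ≠ u ∧ w ≠ u⁻¹ := by
    intro w hw
    have habs := mem_sphere_abs hw
    refine ⟨?_, ?_, ?_⟩
    · intro h; rw [h] at habs; simp at habs; linarith
    · exact (ne_of_abs_lt (by rw [habs]; linarith)).symm
    · exact (ne_of_abs_lt (by rw [habs]; linarith)).symm
  have hmemA : ∀ w : ℂ, r⁻¹ ≤ ‖w‖ → ‖w‖ ≤ r → w ∈ Ann ρ⁻¹ ρ := by
    intro w ha hb
    have : ρ⁻¹ < r⁻¹ := inv_strictAnti₀ hr0 h3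
    exact ⟨by linarith, by linarith⟩
  have hsphere_out : ∀ w ∈ sphere (0:ℂ) r, w ∈ Ann ρ⁻¹ ρ := by
    intro w hw
    have habs := mem_sphere_abs hw
    exact hmemA w (by rw [habs]; linarith) (by rw [habs])
  have hsphere_in : ∀ w ∈ sphere (0:ℂ) r⁻¹, w ∈ Ann ρ⁻¹ ρ := by
    intro w hw
    have habs := mem_sphere_abs hw
    exact hmemA w (by rw [habs]) (by rw [habs]; linarith)
  have hGoursat : (∮ w in C(0, r), g₂ w * (w - w⁻¹)) = ∮ w in C(0, r⁻¹), g₂ w * (w - w⁻¹) := by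
    apply Complex.circleIntegral_eq_of_differentiable_on_annulus_off_countable hri0
      (by linarith) countable_empty
    · intro w hw
      simp only [mem_diff, mem_closedBall, mem_ball, Complex.dist_eq, sub_zero, not_lt] at hw
      have hwA := hmemA w hw.2 hw.1
      have hw0 : w ≠ 0 := ne_zero_of_mem_Ann hρ0.le hwA
      exact ((hg₂.differentiableAt (hAnn.mem_nhds hwA)).mul
        (differentiableAt_id.sub (differentiableAt_inv hw0))).continuousAt.continuousWithinAt
    · intro w hw
      simp only [mem_diff, mem_ball, mem_closedBall, Complex.dist_eq, sub_zero, not_le,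
        mem_empty_iff_false, not_false_iff, and_true] at hw
      have hwA := hmemA w hw.2.le hw.1.le
      have hw0 : w ≠ 0 := ne_zero_of_mem_Ann hρ0.le hwA
      exact (hg₂.differentiableAt (hAnn.mem_nhds hwA)).mul
        (differentiableAt_id.sub (differentiableAt_inv hw0))
  have hcongr : ∀ s : ℝ, (∀ w ∈ sphere (0:ℂ) s, w ≠ 0 ∧ w ≠ u ∧ w ≠ u⁻¹) → 0 ≤ s →
      (∮ w in C(0, s), g₂ w * (w - w⁻¹))
        = ∮ w in C(0, s), (g f w - f (J u)) * Ker u w := by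
    intro s hs hs0
    apply circleIntegral.integral_congr hs0
    intro w hw
    obtain ⟨hw0, hwu, hwui⟩ := hs w hw
    have h1' : w - u ≠ 0 := sub_ne_zero.mpr hwu
    have h2' : w - u⁻¹ ≠ 0 := sub_ne_zero.mpr hwui
    dsimp
    rw [hfact w]
    unfold Ker
    symm
    calc (w - u) * ((w - u⁻¹) * g₂ w) * ((w - w⁻¹) / ((w - u) * (w - u⁻¹)))
        = (g₂ w * (w - w⁻¹)) * ((w - u) * (w - u)⁻¹) * ((w - u⁻¹) * (w - u⁻¹)⁻¹) := by
          rw [div_eq_mul_inv, mul_inv]; ring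
      _ = g₂ w * (w - w⁻¹) := by
          rw [mul_inv_cancel₀ h1', mul_inv_cancel₀ h2', mul_one, mul_one]
  have hKsplit : ∀ s : ℝ, 0 ≤ s → (∀ w ∈ sphere (0:ℂ) s, w ≠ 0 ∧ w ≠ u ∧ w ≠ u⁻¹) →
      (∮ w in C(0, s), Ker u w)
        = (∮ w in C(0, s), (w - u)⁻¹) - ((∮ w in C(0, s), (w - 0)⁻¹) - ∮ w in C(0, s), (w - u⁻¹)⁻¹) := by
    intro s hs0 hs
    have hpf : Set.EqOn (Ker u) (fun w => (w - u)⁻¹ - ((w - 0)⁻¹ - (w - u⁻¹)⁻¹)) (sphere (0:ℂ) s) := by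
      intro w hw
      obtain ⟨hw0, hwu, hwui⟩ := hs w hw
      have h1' : w - u ≠ 0 := sub_ne_zero.mpr hwu
      have h2' : w - u⁻¹ ≠ 0 := sub_ne_zero.mpr hwui
      have h3' : w * u - 1 ≠ 0 := by
        intro h
        apply h2'
        have key : (w - u⁻¹) * u = w * u - 1 := by
          rw [sub_mul, inv_mul_cancel₀ hu0]
        rw [h] at key
        exact (mul_eq_zero.mp key).resolve_right hu0
      unfold Ker
      dsimp
      rw [sub_zero]
      field_simp [hw0, hu0, h1', h2', h3']
      ring
    have int1 : CircleIntegrable (fun w => (w - u)⁻¹) 0 s :=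
      ContinuousOn.circleIntegrable hs0 ((continuousOn_id.sub continuousOn_const).inv₀
        (fun w hw => sub_ne_zero.mpr (hs w hw).2.1))
    have int2 : CircleIntegrable (fun w => (w - u⁻¹)⁻¹) 0 s :=
      ContinuousOn.circleIntegrable hs0 ((continuousOn_id.sub continuousOn_const).inv₀
        (fun w hw => sub_ne_zero.mpr (hs w hw).2.2))
    have int3 : CircleIntegrable (fun w : ℂ => (w - 0)⁻¹) 0 s :=
      ContinuousOn.circleIntegrable hs0 ((continuousOn_id.sub continuousOn_const).inv₀
        (fun w hw => sub_ne_zero.mpr (by simpa using (hs w hw).1)))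
    rw [circleIntegral.integral_congr hs0 hpf]
    rw [circleIntegral.integral_sub (f := fun w => (w - u)⁻¹)
      (g := fun w => (w - 0)⁻¹ - (w - u⁻¹)⁻¹) int1 (int3.sub int2)]
    rw [circleIntegral.integral_sub (f := fun w : ℂ => (w - 0)⁻¹)
      (g := fun w => (w - u⁻¹)⁻¹) int3 int2]
  have hu_ball : u ∈ Metric.ball (0:ℂ) r := by
    rw [mem_ball_zero_iff]; linarith
  have hui_ball : u⁻¹ ∈ Metric.ball (0:ℂ) r := by
    rw [mem_ball_zero_iff]; linarith [huiabs1]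
  have hKouter : (∮ w in C(0, r), Ker u w) = 2 * (Real.pi : ℂ) * I := by
    rw [hKsplit r hr0.le houter,
      circleIntegral.integral_sub_inv_of_mem_ball hu_ball,
      circleIntegral.integral_sub_inv_of_mem_ball hui_ball,
      circleIntegral.integral_sub_inv_of_mem_ball (mem_ball_self hr0)]
    ring
  have hKinner : (∮ w in C(0, r⁻¹), Ker u w) = -(2 * (Real.pi : ℂ) * I) := by
    rw [hKsplit r⁻¹ hri0.le hinner]
    have hzero : ∀ a : ℂ, r⁻¹ < ‖a‖ → (∮ w in C(0, r⁻¹), (w - a)⁻¹) = 0 := by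
      intro a ha
      apply Complex.circleIntegral_eq_zero_of_differentiable_on_off_countable hri0.le
        countable_empty
      · apply (continuousOn_id.sub continuousOn_const).inv₀
        intro w hw
        apply sub_ne_zero.mpr
        apply (ne_of_abs_lt _).symm
        calc ‖w‖ ≤ r⁻¹ := by
              simpa [Complex.dist_eq] using mem_closedBall.mp hw
          _ < ‖a‖ := ha
      · intro w hw
        simp only [mem_diff, mem_ball, Complex.dist_eq, sub_zero, mem_empty_iff_false,
          not_false_iff, and_true] at hw
        apply DifferentiableAt.inv
        · exact differentiableAt_id.sub (differentiableAt_const a)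
        · apply sub_ne_zero.mpr
          exact (ne_of_abs_lt (by linarith)).symm
    rw [hzero u (by linarith), hzero u⁻¹ (by linarith),
      circleIntegral.integral_sub_inv_of_mem_ball (mem_ball_self hri0)]
    ring
  have hsym : (∮ w in C(0, r⁻¹), g f w * Ker u w) = - ∮ w in C(0, r), g f w * Ker u w := by
    simp only [circleIntegral, deriv_circleMap]
    rw [← intervalIntegral.integral_neg]
    have hcs := intervalIntegral.integral_comp_sub_left
      (fun θ => (circleMap 0 r⁻¹ θ * I) • (g f (circleMap 0 r⁻¹ θ) * Ker u (circleMap 0 r⁻¹ θ)))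
      (2 * Real.pi) (a := 0) (b := 2 * Real.pi)
    rw [sub_self, sub_zero] at hcs
    rw [← hcs]
    apply intervalIntegral.integral_congr
    intro θ _
    set v : ℂ := circleMap 0 r θ with hvdef
    have hvmem : v ∈ sphere (0:ℂ) r := by
      rw [hvdef]; exact circleMap_mem_sphere 0 hr0.le θ
    obtain ⟨hv0, hvu, hvui⟩ := houter v hvmem
    have hinvmap : circleMap 0 r⁻¹ (2 * Real.pi - θ) = v⁻¹ := by
      simp only [circleMap, zero_add, hvdef]
      rw [mul_inv, ← Complex.ofReal_inv]
      congr 1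
      have harg : ((2 * Real.pi - θ : ℝ) : ℂ) * I = 2 * (Real.pi:ℂ) * I - (θ:ℂ) * I := by
        push_cast; ring
      rw [harg, Complex.exp_sub, Complex.exp_two_pi_mul_I, one_div]
    have hgsym : g f v⁻¹ = g f v := by unfold g; rw [J_inv]
    have hviu : v⁻¹ - u ≠ 0 := by
      apply sub_ne_zero.mpr
      apply (ne_of_abs_lt _).symm
      rw [norm_inv, mem_sphere_abs hvmem]
      linarith
    have hviui : v⁻¹ - u⁻¹ ≠ 0 := by
      apply sub_ne_zero.mpr
      intro h
      exact hvu (inv_injective h)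
    have hKsym : Ker u v⁻¹ = -(v^2) * Ker u v := by
      unfold Ker
      rw [inv_inv]
      have h1' : v - u ≠ 0 := sub_ne_zero.mpr hvu
      have h2' : v - u⁻¹ ≠ 0 := sub_ne_zero.mpr hvui
      rw [mul_div_assoc', div_eq_div_iff (mul_ne_zero hviu hviui) (mul_ne_zero h1' h2')]
      have ev : v * v⁻¹ = 1 := mul_inv_cancel₀ hv0
      have eu : u * u⁻¹ = 1 := mul_inv_cancel₀ hu0
      linear_combination (-(v⁻¹ - v) * (2 - v * u - v * u⁻¹ + (v * v⁻¹ - 1))) * ev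
        + (-(v⁻¹ - v) * (v ^ 2 - 1)) * eu
    dsimp only
    rw [hinvmap, hgsym, hKsym]
    simp only [smul_eq_mul]
    field_simp [hv0]
    ring
  -- linearity on each circle
  have hlin : ∀ s : ℝ, 0 ≤ s → (∀ w ∈ sphere (0:ℂ) s, w ≠ 0 ∧ w ≠ u ∧ w ≠ u⁻¹) →
      (∀ w ∈ sphere (0:ℂ) s, w ∈ Ann ρ⁻¹ ρ) →
      (∮ w in C(0, s), (g f w - f (J u)) * Ker u w)
        = (∮ w in C(0, s), g f w * Ker u w) - f (J u) * ∮ w in C(0, s), Ker u w := by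
    intro s hs0 hs hsub
    have hKc : ContinuousOn (Ker u) (sphere (0:ℂ) s) := KerCont hs
    have hgc : ContinuousOn (g f) (sphere (0:ℂ) s) :=
      fun w hw => (g_diffAt hρ hf (hsub w hw)).continuousAt.continuousWithinAt
    have int1 : CircleIntegrable (fun w => g f w * Ker u w) 0 s :=
      ContinuousOn.circleIntegrable hs0 (hgc.mul hKc)
    have int2 : CircleIntegrable (fun w => f (J u) * Ker u w) 0 s :=
      ContinuousOn.circleIntegrable hs0 (continuousOn_const.mul hKc)
    have heq : Set.EqOn (fun w => (g f w - f (J u)) * Ker u w)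
        (fun w => g f w * Ker u w - f (J u) * Ker u w) (sphere (0:ℂ) s) := by
      intro w _; dsimp; ring
    rw [circleIntegral.integral_congr hs0 heq, circleIntegral.integral_sub int1 int2]
    congr 1
    exact circleIntegral.integral_const_mul (f (J u)) (Ker u) 0 s
  have E1 := hcongr r houter hr0.le
  have E2 := hcongr r⁻¹ hinner hri0.le
  have L1 := hlin r hr0.le houter hsphere_out
  have L2 := hlin r⁻¹ hri0.le hinner hsphere_in
  rw [L1, hKouter] at E1
  rw [L2, hKinner, hsym] at E2
  have := (E1.symm.trans hGoursat).trans E2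
  linear_combination (1/2 : ℂ) * this

lemma circleIntegral_sum {s : Finset ℕ} {F : ℕ → ℂ → ℂ} {c : ℂ} {R : ℝ}
    (h : ∀ i ∈ s, CircleIntegrable (F i) c R) :
    (∮ w in C(c, R), ∑ i ∈ s, F i w) = ∑ i ∈ s, ∮ w in C(c, R), F i w := by
  simp only [circleIntegral]
  rw [← intervalIntegral.integral_finset_sum (fun i hi => (h i hi).out)]
  apply intervalIntegral.integral_congr
  intro θ _
  simp only [smul_eq_mul, Finset.mul_sum]

lemma geo (a w : ℂ) (hw : w ≠ 0) (hwa : w ≠ a) (N : ℕ) :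
    ∑ k ∈ Finset.range N, a ^ k * (w⁻¹) ^ (k + 1) = (1 - a ^ N * (w⁻¹) ^ N) / (w - a) := by
  have h1 : w - a ≠ 0 := sub_ne_zero.mpr hwa
  induction N with
  | zero => simp
  | succ n ih =>
    rw [Finset.sum_range_succ, ih]
    field_simp
    have ew : w * w⁻¹ = 1 := mul_inv_cancel₀ hw
    linear_combination (a ^ n * w⁻¹ ^ n) * ew

lemma Rform (u w : ℂ) (hu0 : u ≠ 0) (hw0 : w ≠ 0) (hwu : w ≠ u) (hwui : w ≠ u⁻¹) :
    ∀ {N : ℕ}, 1 ≤ N →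
    Ker u w = (∑ k ∈ Finset.range N,
        (if k = 0 then (1:ℂ) else 2) * ((Chebyshev.T ℂ (k:ℤ)).eval (J u)) * (w⁻¹) ^ (k + 1))
      + (u ^ N / (w - u) + (u⁻¹) ^ N / (w - u⁻¹)) * (w⁻¹) ^ N := by
  have h1' : w - u ≠ 0 := sub_ne_zero.mpr hwu
  have h2' : w - u⁻¹ ≠ 0 := sub_ne_zero.mpr hwui
  have h3' : w * u - 1 ≠ 0 := by
    intro h
    apply h2'
    have key : (w - u⁻¹) * u = w * u - 1 := by
      rw [sub_mul, inv_mul_cancel₀ hu0]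
    rw [h] at key
    exact (mul_eq_zero.mp key).resolve_right hu0
  intro N hN
  induction N with
  | zero => exact absurd hN (by omega)
  | succ n ih =>
    rcases Nat.eq_zero_or_pos n with h0 | hpos
    · subst h0
      simp only [Finset.range_one, Finset.sum_singleton, if_pos rfl, Nat.cast_zero, pow_one,
        zero_add, pow_zero]
      have hT0 : (Chebyshev.T ℂ (0:ℤ)).eval (J u) = 1 := by
        simp [Polynomial.Chebyshev.T_zero]
      rw [hT0]
      unfold Ker
      field_simp [hu0, hw0, h1', h2', h3']
      simp only [if_true]
      ring
    · rw [Finset.sum_range_succ, ih hpos, add_assoc]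
      congr 1
      have hn0 : n ≠ 0 := by omega
      rw [if_neg hn0, T_eval_J u hu0 n]
      rw [pow_succ u n, pow_succ u⁻¹ n, pow_succ w⁻¹ n]
      have ea : (w - u) * (w - u)⁻¹ = 1 := mul_inv_cancel₀ h1'
      have eb : (w - u⁻¹) * (w - u⁻¹)⁻¹ = 1 := mul_inv_cancel₀ h2'
      have ew : w * w⁻¹ = 1 := mul_inv_cancel₀ hw0
      linear_combination (u^n * (w⁻¹)^n * w⁻¹) * ea - (u^n * (w⁻¹)^n * (w - u)⁻¹) * ew
        + ((u⁻¹)^n * (w⁻¹)^n * w⁻¹) * eb - ((u⁻¹)^n * (w⁻¹)^n * (w - u⁻¹)⁻¹) * ew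

lemma exists_u {ρ' : ℝ} {z : ℂ} (hz : z ∈ canonicalEllipseRegion ρ') :
    ∃ u : ℂ, 1 ≤ ‖u‖ ∧ ‖u‖ < ρ' ∧ z = J u := by
  obtain ⟨w, hw1, hw2, rfl⟩ := hz
  have hρ'0 : 0 < ρ' := lt_of_le_of_lt (norm_nonneg w) hw2
  have hw0 : 0 < ‖w‖ := lt_trans (inv_pos.2 hρ'0) hw1
  rcases le_or_gt 1 (‖w‖) with h | h
  · exact ⟨w, h, hw2, rfl⟩
  · refine ⟨w⁻¹, ?_, ?_, (J_inv w).symm⟩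
    · rw [norm_inv]
      have := inv_strictAnti₀ hw0 h
      rw [inv_one] at this
      exact this.le
    · rw [norm_inv]
      have := inv_strictAnti₀ (inv_pos.2 hρ'0) hw1
      rwa [inv_inv] at this

lemma region_mem_nhds {ρ₁ : ℝ} (h1 : 1 < ρ₁) {u : ℂ}
    (hu1 : ρ₁⁻¹ < ‖u‖) (hu2 : ‖u‖ < ρ₁) :
    canonicalEllipseRegion ρ₁ ∈ 𝓝 (J u) := by
  have hρ₁0 : (0:ℝ) < ρ₁⁻¹ := inv_pos.2 (by linarith)
  have hu0 : u ≠ 0 := by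
    intro h; rw [h] at hu1; simp at hu1; linarith
  have hJana : AnalyticAt ℂ J u := by
    have hd : DifferentiableOn ℂ J {w : ℂ | w ≠ 0} := by
      intro v hv
      exact ((differentiableAt_id.add (differentiableAt_inv hv)).div_const 2).differentiableWithinAt
    exact hd.analyticAt (isOpen_ne.mem_nhds hu0)
  rcases hJana.eventually_constant_or_nhds_le_map_nhds with hconst | hle
  · exfalso
    set c : ℕ → ℝ := fun n => 1 + ((n:ℝ) + 1)⁻¹ with hc
    have hcgt : ∀ n : ℕ, 1 < c n := by
      intro n
      have : (0:ℝ) < ((n:ℝ) + 1)⁻¹ := by positivity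
      simp only [hc]; linarith
    have hcne1 : ∀ n : ℕ, ((c n : ℝ) : ℂ) ≠ 1 := by
      intro n
      have : c n ≠ 1 := (hcgt n).ne'
      exact_mod_cast this
    have hcne0 : ∀ n : ℕ, ((c n : ℝ) : ℂ) ≠ 0 := by
      intro n
      have : c n ≠ 0 := by linarith [hcgt n]
      exact_mod_cast this
    have htend : Filter.Tendsto (fun n : ℕ => u * ((c n : ℝ) : ℂ)) Filter.atTop (𝓝 u) := by
      have h0 : Filter.Tendsto (fun n : ℕ => 1 / ((n:ℝ) + 1)) Filter.atTop (𝓝 0) :=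
        tendsto_one_div_add_atTop_nhds_zero_nat
      have h1' : Filter.Tendsto c Filter.atTop (𝓝 1) := by
        have := h0.const_add 1
        simpa [hc, one_div] using this
      have h2' : Filter.Tendsto (fun n : ℕ => ((c n : ℝ) : ℂ)) Filter.atTop (𝓝 (1:ℂ)) := by
        have := (Complex.continuous_ofReal.tendsto 1).comp h1'
        simpa [Function.comp_def] using this
      have := h2'.const_mul u
      simpa using this
    have hev := htend.eventually hconst
    obtain ⟨m, hm⟩ := Filter.eventually_atTop.mp hev
    have key : ∀ b : ℕ, J (u * ((c b : ℝ) : ℂ)) = J u → u ^ 2 * ((c b : ℝ) : ℂ) = 1 := by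
      intro b hb
      set cc : ℂ := ((c b : ℝ) : ℂ) with hccdef
      have hcb0 : cc ≠ 0 := hcne0 b
      have hcb1 : cc ≠ 1 := hcne1 b
      have hub0 : u * cc ≠ 0 := mul_ne_zero hu0 hcb0
      unfold J at hb
      have hb' : u * cc + (u * cc)⁻¹ = u + u⁻¹ := by linear_combination (2:ℂ) * hb
      rw [mul_inv] at hb'
      have e1 : u * u⁻¹ = 1 := mul_inv_cancel₀ hu0
      have e2 : cc * cc⁻¹ = 1 := mul_inv_cancel₀ hcb0
      have hfact : (cc - 1) * (u ^ 2 * cc - 1) = 0 := by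
        linear_combination (u * cc) * hb' + (cc - cc * cc⁻¹) * e1 - e2
      rcases mul_eq_zero.mp hfact with h | h
      · exact absurd (by linear_combination h : cc = 1) hcb1
      · linear_combination h
    have k1 := key m (hm m le_rfl)
    have k2 := key (m + 1) (hm (m + 1) (Nat.le_succ m))
    have hu2ne : (u ^ 2 : ℂ) ≠ 0 := pow_ne_zero 2 hu0
    have hcc : ((c m : ℝ) : ℂ) = ((c (m + 1) : ℝ) : ℂ) :=
      mul_left_cancel₀ hu2ne (k1.trans k2.symm)
    have hcr : c m = c (m + 1) := by exact_mod_cast hcc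
    simp only [hc] at hcr
    have hinv : ((m:ℝ) + 1)⁻¹ = ((m:ℝ) + 1 + 1)⁻¹ := by
      have := add_left_cancel hcr
      convert this using 3
      push_cast
      ring
    have := inv_inj.mp hinv
    linarith
  · apply hle
    rw [Filter.mem_map]
    apply Filter.mem_of_superset ((isOpen_Ann ρ₁⁻¹ ρ₁).mem_nhds ⟨hu1, hu2⟩)
    intro w hw
    exact mapsTo_J_Ann ρ₁ w hw

set_option maxHeartbeats 1000000 in
lemma est (hρ : 1 < ρ) (hf : DifferentiableOn ℂ f (canonicalEllipseRegion ρ))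
    {ρ₁ r : ℝ} (h1 : 1 < ρ₁) (h2 : ρ₁ < r) (h3 : r < ρ) {M : ℝ}
    (hM : ∀ w ∈ sphere (0:ℂ) r, ‖g f w‖ ≤ M) {N : ℕ} (hN : 1 ≤ N) {z : ℂ}
    (hz : z ∈ canonicalEllipseRegion ρ₁) :
    ‖f z - ∑ k ∈ Finset.range N,
        fourierChebyshevCoeff f k * (Chebyshev.T ℂ (k : ℤ)).eval z‖
      ≤ (r * M * (1 / (r - ρ₁) + 1 / (r - 1))) * (ρ₁ / r) ^ N := by
  obtain ⟨u, hu1, hu2, rfl⟩ := exists_u hz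
  have hr1 : 1 < r := h1.trans h2
  have hr0 : 0 < r := by linarith
  have hρ0 : (0:ℝ) < ρ⁻¹ := inv_pos.2 (by linarith)
  have hρinv1 : ρ⁻¹ < 1 := inv_lt_one_of_one_lt₀ hρ
  have hu0 : u ≠ 0 := by
    intro h; rw [h] at hu1; simp at hu1; linarith
  have huiabs : ‖u⁻¹‖ = (‖u‖)⁻¹ := norm_inv _
  have huiabs1 : ‖u⁻¹‖ ≤ 1 := by
    rw [huiabs]; exact inv_le_one_of_one_le₀ hu1
  have hM0 : 0 ≤ M := by
    refine le_trans (norm_nonneg (g f ((r:ℝ):ℂ))) (hM _ ?_)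
    rw [mem_sphere_zero_iff_norm, Complex.norm_of_nonneg hr0.le]
  have hsph : ∀ w ∈ sphere (0:ℂ) r, w ≠ 0 ∧ w ≠ u ∧ w ≠ u⁻¹ := by
    intro w hw
    have habs := mem_sphere_abs hw
    refine ⟨?_, ?_, ?_⟩
    · intro h; rw [h] at habs; simp at habs; linarith
    · exact ne_of_abs_lt (by rw [habs]; linarith)
    · exact ne_of_abs_lt (by rw [habs]; linarith [huiabs1])
  have hsubA : ∀ w ∈ sphere (0:ℂ) r, w ∈ Ann ρ⁻¹ ρ := by
    intro w hw
    have habs := mem_sphere_abs hw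
    exact ⟨by rw [habs]; linarith, by rw [habs]; linarith⟩
  set tpi : ℂ := 2 * (Real.pi : ℂ) * I with htpi
  have htpine : tpi ≠ 0 := by
    simp [htpi, Real.pi_ne_zero, Complex.I_ne_zero, Complex.ofReal_ne_zero]
  have hgc : ContinuousOn (g f) (sphere (0:ℂ) r) :=
    fun w hw => (g_diffAt hρ hf (hsubA w hw)).continuousAt.continuousWithinAt
  have hKc : ContinuousOn (Ker u) (sphere (0:ℂ) r) := KerCont hsph
  have hPkc : ∀ k : ℕ, ContinuousOn
      (fun w : ℂ => g f w * ((if k = 0 then (1:ℂ) else 2) *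
        ((Chebyshev.T ℂ (k:ℤ)).eval (J u)) * (w⁻¹) ^ (k + 1))) (sphere (0:ℂ) r) := by
    intro k
    apply hgc.mul
    apply continuousOn_const.mul
    exact (continuousOn_id.inv₀ (fun w hw => (hsph w hw).1)).pow (k+1)
  set P : ℂ → ℂ := fun w => ∑ k ∈ Finset.range N,
    (if k = 0 then (1:ℂ) else 2) * ((Chebyshev.T ℂ (k:ℤ)).eval (J u)) * (w⁻¹) ^ (k + 1)
    with hP
  have hS : (∑ k ∈ Finset.range N, fourierChebyshevCoeff f k * (Chebyshev.T ℂ (k:ℤ)).eval (J u))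
      = tpi⁻¹ * ∮ w in C(0, r), g f w * P w := by
    have hterm : ∀ k ∈ Finset.range N,
        fourierChebyshevCoeff f k * (Chebyshev.T ℂ (k:ℤ)).eval (J u)
          = tpi⁻¹ * ∮ w in C(0, r), g f w * ((if k = 0 then (1:ℂ) else 2) *
              ((Chebyshev.T ℂ (k:ℤ)).eval (J u)) * (w⁻¹) ^ (k + 1)) := by
      intro k _
      rw [coeff_eq_circle hρ hf hr1.le h3 k]
      have e1 : (∮ w in C(0, r), g f w * ((if k = 0 then (1:ℂ) else 2) *
            ((Chebyshev.T ℂ (k:ℤ)).eval (J u)) * (w⁻¹) ^ (k + 1)))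
          = ((if k = 0 then (1:ℂ) else 2) * ((Chebyshev.T ℂ (k:ℤ)).eval (J u))) *
              ∮ w in C(0, r), g f w * (w⁻¹) ^ (k + 1) := by
        rw [← circleIntegral.integral_const_mul]
        apply circleIntegral.integral_congr hr0.le
        intro w _
        dsimp
        ring
      rw [e1, htpi]
      ring
    rw [Finset.sum_congr rfl hterm, ← Finset.mul_sum]
    congr 1
    rw [← circleIntegral_sum (fun k _ => ContinuousOn.circleIntegrable hr0.le (hPkc k))]
    apply circleIntegral.integral_congr hr0.le
    intro w _
    dsimp only [hP]
    rw [Finset.mul_sum]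
  have hfz : f (J u) = tpi⁻¹ * ∮ w in C(0, r), g f w * Ker u w := by
    rw [rep hρ hf h1 h2 h3 hu1 hu2, htpi]
    field_simp
  have intK : CircleIntegrable (fun w => g f w * Ker u w) 0 r :=
    ContinuousOn.circleIntegrable hr0.le (hgc.mul hKc)
  have hPc : ContinuousOn P (sphere (0:ℂ) r) := by
    rw [hP]
    apply continuousOn_finset_sum
    intro k _
    apply continuousOn_const.mul
    exact (continuousOn_id.inv₀ (fun w hw => (hsph w hw).1)).pow (k+1)
  have intP : CircleIntegrable (fun w => g f w * P w) 0 r :=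
    ContinuousOn.circleIntegrable hr0.le (hgc.mul hPc)
  have hdiff : f (J u) - (∑ k ∈ Finset.range N,
        fourierChebyshevCoeff f k * (Chebyshev.T ℂ (k:ℤ)).eval (J u))
      = tpi⁻¹ * ∮ w in C(0, r), (g f w * Ker u w - g f w * P w) := by
    rw [hfz, hS, ← mul_sub, circleIntegral.integral_sub intK intP]
  have hcongrR : (∮ w in C(0, r), (g f w * Ker u w - g f w * P w))
      = ∮ w in C(0, r), g f w * ((u ^ N / (w - u) + (u⁻¹) ^ N / (w - u⁻¹)) * (w⁻¹) ^ N) := by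
    apply circleIntegral.integral_congr hr0.le
    intro w hw
    obtain ⟨hw0, hwu, hwui⟩ := hsph w hw
    dsimp only [hP]
    rw [Rform u w hu0 hw0 hwu hwui hN]
    ring
  set B : ℝ := M * ((ρ₁ ^ N / (r - ρ₁) + 1 / (r - 1)) * (r⁻¹) ^ N) with hB
  have hbound : ∀ w ∈ sphere (0:ℂ) r,
      ‖g f w * ((u ^ N / (w - u) + (u⁻¹) ^ N / (w - u⁻¹)) * (w⁻¹) ^ N)‖ ≤ B := by
    intro w hw
    obtain ⟨hw0, hwu, hwui⟩ := hsph w hw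
    have habs := mem_sphere_abs hw
    have hnw : ‖w‖ = r := by rw [habs]
    have hd1 : r - ρ₁ ≤ ‖w - u‖ := by
      refine le_trans ?_ (norm_sub_norm_le w u)
      rw [hnw]
      linarith
    have hd2 : r - 1 ≤ ‖w - u⁻¹‖ := by
      refine le_trans ?_ (norm_sub_norm_le w u⁻¹)
      rw [hnw]
      linarith [huiabs1]
    have hb1 : ‖u ^ N / (w - u)‖ ≤ ρ₁ ^ N / (r - ρ₁) := by
      rw [norm_div, norm_pow]
      exact div_le_div₀ (by positivity) (pow_le_pow_left₀ (norm_nonneg u) hu2.le N)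
        (by linarith) hd1
    have hb2 : ‖(u⁻¹) ^ N / (w - u⁻¹)‖ ≤ 1 / (r - 1) := by
      rw [norm_div, norm_pow]
      exact div_le_div₀ zero_le_one (pow_le_one₀ (norm_nonneg u⁻¹) huiabs1)
        (by linarith) hd2
    have hb3 : ‖(w⁻¹ : ℂ) ^ N‖ = (r⁻¹) ^ N := by
      rw [norm_pow, norm_inv, hnw]
    rw [norm_mul, norm_mul, hb3]
    have hsum' : ‖u ^ N / (w - u) + (u⁻¹) ^ N / (w - u⁻¹)‖ ≤ ρ₁ ^ N / (r - ρ₁) + 1 / (r - 1) :=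
      le_trans (norm_add_le _ _) (add_le_add hb1 hb2)
    rw [hB]
    apply mul_le_mul (hM w hw) _ (by positivity) hM0
    exact mul_le_mul_of_nonneg_right hsum' (by positivity)
  have hnorm : ‖∮ w in C(0, r), g f w * ((u ^ N / (w - u) + (u⁻¹) ^ N / (w - u⁻¹)) * (w⁻¹) ^ N)‖
      ≤ 2 * Real.pi * r * B :=
    circleIntegral.norm_integral_le_of_norm_le_const hr0.le hbound
  have htpinorm : ‖tpi⁻¹‖ = (2 * Real.pi)⁻¹ := by
    rw [norm_inv, htpi]
    simp [abs_of_pos Real.pi_pos]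
  calc ‖f (J u) - ∑ k ∈ Finset.range N,
        fourierChebyshevCoeff f k * (Chebyshev.T ℂ (k:ℤ)).eval (J u)‖
      = ‖tpi⁻¹‖ * ‖∮ w in C(0, r), g f w *
          ((u ^ N / (w - u) + (u⁻¹) ^ N / (w - u⁻¹)) * (w⁻¹) ^ N)‖ := by
        rw [hdiff, hcongrR, norm_mul]
    _ ≤ (2 * Real.pi)⁻¹ * (2 * Real.pi * r * B) := by
        rw [htpinorm]
        exact mul_le_mul_of_nonneg_left hnorm (by positivity)
    _ = r * B := by
        field_simp
    _ ≤ (r * M * (1 / (r - ρ₁) + 1 / (r - 1))) * (ρ₁ / r) ^ N := by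
        have hp1 : (1:ℝ) ≤ ρ₁ ^ N := one_le_pow₀ (by linarith)
        have hfrac : ρ₁ ^ N / (r - ρ₁) + 1 / (r - 1)
            ≤ (1 / (r - ρ₁) + 1 / (r - 1)) * ρ₁ ^ N := by
          have e : (1 / (r - ρ₁) + 1 / (r - 1)) * ρ₁ ^ N
              = ρ₁ ^ N / (r - ρ₁) + ρ₁ ^ N / (r - 1) := by ring
          rw [e]
          have : 1 / (r - 1) ≤ ρ₁ ^ N / (r - 1) :=
            div_le_div₀ (by positivity) hp1 (by linarith) le_rfl
          linarith
        have hq : (ρ₁ / r) ^ N = ρ₁ ^ N * (r⁻¹) ^ N := by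
          rw [div_pow, div_eq_mul_inv, ← inv_pow]
        rw [hB, hq]
        calc r * (M * ((ρ₁ ^ N / (r - ρ₁) + 1 / (r - 1)) * (r⁻¹) ^ N))
            = r * M * (ρ₁ ^ N / (r - ρ₁) + 1 / (r - 1)) * (r⁻¹) ^ N := by ring
          _ ≤ r * M * ((1 / (r - ρ₁) + 1 / (r - 1)) * ρ₁ ^ N) * (r⁻¹) ^ N := by
              apply mul_le_mul_of_nonneg_right _ (by positivity)
              exact mul_le_mul_of_nonneg_left hfrac (by positivity)
          _ = r * M * (1 / (r - ρ₁) + 1 / (r - 1)) * (ρ₁ ^ N * (r⁻¹) ^ N) := by ring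

end Part4


end Main
end ChebyshevSeriesAux



/-- If `f` is holomorphic on the open canonical ellipse region of index `ρ > 1`,
then its Fourier–Chebyshev series `Σ_k c_k T_k(z)` converges to `f` locally uniformly
(uniformly on every compact subset) on that region. -/
theorem fourierChebyshev_series_tendstoLocallyUniformlyOn (ρ : ℝ) (hρ : 1 < ρ)
    (f : ℂ → ℂ) (hf : DifferentiableOn ℂ f (canonicalEllipseRegion ρ)) :
    TendstoLocallyUniformlyOn
      (fun N : ℕ => fun z : ℂ =>
        ∑ k ∈ Finset.range N,
          fourierChebyshevCoeff f k * (Polynomial.Chebyshev.T ℂ (k : ℤ)).eval z)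
      f Filter.atTop (canonicalEllipseRegion ρ) := by
  classical
  rw [Metric.tendstoLocallyUniformlyOn_iff]
  intro ε hε z₀ hz₀
  obtain ⟨u, hu1, hu2, rfl⟩ := ChebyshevSeriesAux.exists_u hz₀
  set ρ₁ : ℝ := (‖u‖ + ρ) / 2 with hρ₁
  have h1 : 1 < ρ₁ := by rw [hρ₁]; linarith
  have h2 : ‖u‖ < ρ₁ := by rw [hρ₁]; linarith
  have h3 : ρ₁ < ρ := by rw [hρ₁]; linarith
  set r : ℝ := (ρ₁ + ρ) / 2 with hr
  have h4 : ρ₁ < r := by rw [hr]; linarith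
  have h5 : r < ρ := by rw [hr]; linarith
  have hr1 : 1 < r := lt_trans h1 h4
  have hr0 : 0 < r := by linarith
  have hnh : canonicalEllipseRegion ρ₁ ∈ nhds (ChebyshevSeriesAux.J u) := by
    apply ChebyshevSeriesAux.region_mem_nhds h1 _ h2
    calc ρ₁⁻¹ < 1 := inv_lt_one_of_one_lt₀ h1
      _ ≤ ‖u‖ := hu1
  refine ⟨canonicalEllipseRegion ρ₁, mem_nhdsWithin_of_mem_nhds hnh, ?_⟩
  have hgc : ContinuousOn (ChebyshevSeriesAux.g f) (Metric.sphere (0:ℂ) r) := by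
    intro w hw
    have habs : ‖w‖ = r := ChebyshevSeriesAux.mem_sphere_abs hw
    have hwA : w ∈ ChebyshevSeriesAux.Ann ρ⁻¹ ρ := by
      constructor
      · rw [habs]
        calc ρ⁻¹ < 1 := inv_lt_one_of_one_lt₀ hρ
          _ < r := hr1
      · rw [habs]; exact h5
    exact (ChebyshevSeriesAux.g_diffAt hρ hf hwA).continuousAt.continuousWithinAt
  obtain ⟨C, hC⟩ := (isCompact_sphere (0:ℂ) r).exists_bound_of_continuousOn hgc
  set M : ℝ := max C 0 with hMdef
  have hM : ∀ w ∈ Metric.sphere (0:ℂ) r, ‖ChebyshevSeriesAux.g f w‖ ≤ M :=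
    fun w hw => (hC w hw).trans (le_max_left _ _)
  set Const : ℝ := r * M * (1 / (r - ρ₁) + 1 / (r - 1)) with hConst
  have hq0 : (0:ℝ) ≤ ρ₁ / r := by positivity
  have hq1 : ρ₁ / r < 1 := (div_lt_one hr0).2 h4
  have htends : Filter.Tendsto (fun N : ℕ => Const * (ρ₁ / r) ^ N) Filter.atTop (nhds 0) := by
    have := (tendsto_pow_atTop_nhds_zero_of_lt_one hq0 hq1).const_mul Const
    simpa using this
  filter_upwards [htends.eventually_lt_const hε, Filter.eventually_ge_atTop 1] with N hNlt hN1
  intro y hy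
  rw [dist_eq_norm]
  exact lt_of_le_of_lt (ChebyshevSeriesAux.est hρ hf h1 h4 h5 hM hN1 hy) hNlt
end

section
/- Let b ∈ ℂ with Im b > 0, and let S ⊂ ℂ be the closed straight segment joining the conjugate point b̄ to b (a vertical segment, symmetric with respect to the real axis). Then there exists a holomorphic function g on ℂ \ S such that g(z)² = (z − b)(z − b̄) for all z ∈ ℂ \ S, and g takes real values at every real point of ℂ \ S. (Thus the two-valued algebraic function √((z−b)(z−b̄)) admits a single-valued holomorphic branch, real on the real axis off the cut, in the complement of the segment S joining its two branch points; this is the sense in which such a function extends single-valuedly from [−1,1] to the complement of an admissible compact.) -/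
open Complex

lemma mem_seg_iff (b : ℂ) (hb : 0 < b.im) (z : ℂ) :
    z ∈ segment ℝ (starRingEnd ℂ b) b ↔ z.re = b.re ∧ |z.im| ≤ b.im := by
  rw [segment_eq_image]
  constructor
  · rintro ⟨t, ⟨ht0, ht1⟩, rfl⟩
    constructor
    · simp [Complex.add_re, Complex.smul_re]
      ring
    · have : ((1 - t) • (starRingEnd ℂ) b + t • b).im = (2 * t - 1) * b.im := by
        simp [Complex.add_im, Complex.smul_im]
        ring
      rw [this, abs_mul, abs_of_pos hb]
      have : |2 * t - 1| ≤ 1 := by rw [abs_le]; constructor <;> linarith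
      nlinarith
  · rintro ⟨hre, him⟩
    rw [abs_le] at him
    have hbne : b.im ≠ 0 := ne_of_gt hb
    have h1 : -1 ≤ z.im / b.im := by rw [le_div_iff₀ hb]; linarith [him.1]
    have h2 : z.im / b.im ≤ 1 := by rw [div_le_one hb]; exact him.2
    refine ⟨(z.im / b.im + 1) / 2, ⟨by linarith, by linarith⟩, ?_⟩
    apply Complex.ext
    · simp [Complex.add_re, Complex.smul_re]; linarith [hre]
    · have : ((1 - (z.im / b.im + 1) / 2) • (starRingEnd ℂ) b
          + ((z.im / b.im + 1) / 2) • b).im = (z.im / b.im) * b.im := by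
        simp [Complex.add_im, Complex.smul_im]
        ring
      rw [this, div_mul_cancel₀ _ hbne]

lemma key_slit (b : ℂ) (hb : 0 < b.im) (z : ℂ)
    (hz : z ∉ segment ℝ (starRingEnd ℂ b) b) :
    1 + (b.im : ℂ) ^ 2 / (z - (b.re : ℂ)) ^ 2 ∈ slitPlane := by
  have hwne : z - (b.re : ℂ) ≠ 0 := by
    intro h
    apply hz
    rw [mem_seg_iff b hb]
    have hz' : z = (b.re : ℂ) := by rwa [sub_eq_zero] at h
    simp [hz', le_of_lt hb]
  by_contra hns
  rw [mem_slitPlane_iff] at hns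
  push_neg at hns
  obtain ⟨u, hu⟩ : ∃ u : ℂ, u = 1 + (b.im : ℂ) ^ 2 / (z - (b.re : ℂ)) ^ 2 := ⟨_, rfl⟩
  rw [← hu] at hns
  obtain ⟨hure, huim⟩ := hns
  have hw2 : (z - (b.re : ℂ)) ^ 2 ≠ 0 := pow_ne_zero _ hwne
  have key : (b.im : ℂ) ^ 2 = (u - 1) * (z - (b.re : ℂ)) ^ 2 := by
    rw [hu]; field_simp; ring
  set x : ℝ := z.re - b.re with hx
  set y : ℝ := z.im with hy
  have hre2 : ((z - (b.re : ℂ)) ^ 2).re = x ^ 2 - y ^ 2 := by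
    simp only [pow_two, Complex.mul_re, Complex.sub_re, Complex.sub_im,
      Complex.ofReal_re, Complex.ofReal_im, hx, hy]
    ring
  have him2 : ((z - (b.re : ℂ)) ^ 2).im = 2 * x * y := by
    simp only [pow_two, Complex.mul_im, Complex.sub_re, Complex.sub_im,
      Complex.ofReal_re, Complex.ofReal_im, hx, hy]
    ring
  have h0 : (u.re - 1) * (2 * x * y) = 0 := by
    have h := congrArg Complex.im key
    simp only [Complex.mul_im, Complex.sub_im, Complex.sub_re, Complex.one_re,
      Complex.one_im, huim, hre2, him2, sub_self, zero_mul, zero_sub, add_zero,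
      neg_zero, ← Complex.ofReal_pow, Complex.ofReal_im] at h
    linarith
  have hure1 : u.re - 1 < 0 := by linarith
  have hkeyre : (b.im) ^ 2 = (u.re - 1) * (x ^ 2 - y ^ 2) := by
    have h := congrArg Complex.re key
    simp only [Complex.mul_re, Complex.sub_im, Complex.sub_re, Complex.one_re,
      Complex.one_im, huim, hre2, him2, sub_self, zero_mul, sub_zero,
      ← Complex.ofReal_pow, Complex.ofReal_re] at h
    linarith
  have hxy : x * y = 0 := by
    rcases mul_eq_zero.mp h0 with h | h
    · exact absurd h (ne_of_lt hure1)
    · linarith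
  have hx0 : x = 0 := by
    rcases mul_eq_zero.mp hxy with h | h
    · exact h
    · exfalso
      rw [h] at hkeyre
      nlinarith
  rw [hx0] at hkeyre
  have hy2 : y ^ 2 ≤ b.im ^ 2 := by nlinarith
  apply hz
  rw [mem_seg_iff b hb]
  constructor
  · linarith [hx0, hx ▸ hx0]
  · rw [← hy]
    nlinarith [_root_.sq_abs y, abs_nonneg y]

/-- For `b ∈ ℂ` with `Im b > 0` and `S` the closed segment joining `b̄` to `b`,
there is a holomorphic function `g` on `ℂ \ S` with `g(z)² = (z - b)(z - b̄)`
for all `z ∉ S`, taking real values at every real point off `S`: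
a single-valued holomorphic branch of `√((z-b)(z-b̄))`, real on the real axis. -/
theorem exists_holomorphic_sqrt_branch (b : ℂ) (hb : 0 < b.im) :
    ∃ g : ℂ → ℂ,
      DifferentiableOn ℂ g (segment ℝ (starRingEnd ℂ b) b)ᶜ ∧
      (∀ z ∈ (segment ℝ (starRingEnd ℂ b) b)ᶜ,
        g z ^ 2 = (z - b) * (z - starRingEnd ℂ b)) ∧
      (∀ x : ℝ, (x : ℂ) ∈ (segment ℝ (starRingEnd ℂ b) b)ᶜ → (g (x : ℂ)).im = 0) := by
  refine ⟨fun z => (z - (b.re : ℂ)) *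
      Complex.exp (Complex.log (1 + (b.im : ℂ) ^ 2 / (z - (b.re : ℂ)) ^ 2) / 2), ?_, ?_, ?_⟩
  · intro z hz
    rw [Set.mem_compl_iff] at hz
    have hwne : z - (b.re : ℂ) ≠ 0 := by
      intro h
      apply hz
      rw [mem_seg_iff b hb]
      have hz' : z = (b.re : ℂ) := by rwa [sub_eq_zero] at h
      simp [hz', le_of_lt hb]
    have hw2 : (z - (b.re : ℂ)) ^ 2 ≠ 0 := pow_ne_zero _ hwne
    apply DifferentiableAt.differentiableWithinAt
    have hfd : DifferentiableAt ℂ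
        (fun z : ℂ => 1 + (b.im : ℂ) ^ 2 / (z - (b.re : ℂ)) ^ 2) z := by
      apply (differentiableAt_const _).add
      exact (differentiableAt_const _).div ((differentiableAt_id.sub
        (differentiableAt_const _)).pow 2) hw2
    have hlog : DifferentiableAt ℂ
        (fun z : ℂ => Complex.log (1 + (b.im : ℂ) ^ 2 / (z - (b.re : ℂ)) ^ 2)) z :=
      hfd.clog (key_slit b hb z hz)
    exact (differentiableAt_id.sub (differentiableAt_const _)).mul
      ((hlog.div_const 2).cexp)
  · intro z hz
    rw [Set.mem_compl_iff] at hz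
    have hwne : z - (b.re : ℂ) ≠ 0 := by
      intro h
      apply hz
      rw [mem_seg_iff b hb]
      have hz' : z = (b.re : ℂ) := by rwa [sub_eq_zero] at h
      simp [hz', le_of_lt hb]
    have hw2 : (z - (b.re : ℂ)) ^ 2 ≠ 0 := pow_ne_zero _ hwne
    have hune : (1 + (b.im : ℂ) ^ 2 / (z - (b.re : ℂ)) ^ 2) ≠ 0 :=
      Complex.slitPlane_ne_zero (key_slit b hb z hz)
    have hexp : Complex.exp (Complex.log (1 + (b.im : ℂ) ^ 2 / (z - (b.re : ℂ)) ^ 2) / 2) ^ 2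
        = 1 + (b.im : ℂ) ^ 2 / (z - (b.re : ℂ)) ^ 2 := by
      rw [pow_two, ← Complex.exp_add]
      rw [show Complex.log (1 + (b.im : ℂ) ^ 2 / (z - (b.re : ℂ)) ^ 2) / 2 +
          Complex.log (1 + (b.im : ℂ) ^ 2 / (z - (b.re : ℂ)) ^ 2) / 2 =
          Complex.log (1 + (b.im : ℂ) ^ 2 / (z - (b.re : ℂ)) ^ 2) by ring]
      exact Complex.exp_log hune
    rw [mul_pow, hexp]
    have h1 : (starRingEnd ℂ) b = 2 * (b.re : ℂ) - b := by
      have h := Complex.add_conj b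
      push_cast at h
      linear_combination h
    have h2 : (b - (b.re : ℂ)) ^ 2 = -(b.im : ℂ) ^ 2 := by
      have h3 : (b.re : ℂ) + (b.im : ℂ) * I = b := Complex.re_add_im b
      have h4 : (I : ℂ) ^ 2 = -1 := Complex.I_sq
      have h5 : b - (b.re : ℂ) = (b.im : ℂ) * I := by linear_combination -h3
      rw [h5, mul_pow, h4]
      ring
    have expand : (z - (b.re : ℂ)) ^ 2 * (1 + (b.im : ℂ) ^ 2 / (z - (b.re : ℂ)) ^ 2)
        = (z - (b.re : ℂ)) ^ 2 + (b.im : ℂ) ^ 2 := by field_simp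
    rw [h1, expand]
    linear_combination h2
  · intro x hx
    rw [Set.mem_compl_iff] at hx
    have hxne : x - b.re ≠ 0 := by
      intro h
      apply hx
      rw [mem_seg_iff b hb]
      constructor
      · simp; linarith
      · simp [le_of_lt hb]
    have hr : (0 : ℝ) < 1 + b.im ^ 2 / (x - b.re) ^ 2 := by positivity
    have hu : 1 + (b.im : ℂ) ^ 2 / ((x : ℂ) - (b.re : ℂ)) ^ 2
        = ((1 + b.im ^ 2 / (x - b.re) ^ 2 : ℝ) : ℂ) := by
      push_cast
      ring
    have hxr : (x : ℂ) - (b.re : ℂ) = ((x - b.re : ℝ) : ℂ) := by push_cast; ring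
    show (((x : ℂ) - (b.re : ℂ)) *
      Complex.exp (Complex.log (1 + (b.im : ℂ) ^ 2 / ((x : ℂ) - (b.re : ℂ)) ^ 2) / 2)).im = 0
    rw [hu, ← Complex.ofReal_log hr.le, hxr, show ((Real.log (1 + b.im ^ 2 / (x - b.re) ^ 2) : ℂ)) / 2
        = ((Real.log (1 + b.im ^ 2 / (x - b.re) ^ 2) / 2 : ℝ) : ℂ) by push_cast; ring,
      ← Complex.ofReal_exp, ← Complex.ofReal_mul, Complex.ofReal_im]
end
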